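/- For every word w ∈ {0,1}ⁿ with r(w) ∈ R, the image of the exceptional set F_w = {(ω′,x,y) ∈ E_w : ω′₁ = 0, x ∈ S} under ψ is exactly the part of the next sublevel with small x-coordinate: ψ(F_w) = E_{w0} ∩ (Ω × [0, 1/(β−1) − 1] × ℝ). -/

import Mathlib

open MeasureTheory Set Filter
open scoped Classical ENNReal

namespace RandomBeta

noncomputable section

/-- The left shift on `{0,1}^ℕ`. -/
def shift (ω : ℕ → Bool) : ℕ → Bool := fun n => ω (n + 1)

/-- The digit complementation `ω̄ᵢ = 1 - ωᵢ`. -/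
def compSeq (ω : ℕ → Bool) : ℕ → Bool := fun n => !(ω n)

/-- The interval `I_β = [0, 1/(β-1)]`. -/
def Ibeta (β : ℝ) : Set ℝ := Set.Icc 0 (1 / (β - 1))

/-- `L = [0, 1/β)`. -/
def Lset (β : ℝ) : Set ℝ := Set.Ico 0 (1 / β)

/-- `S = [1/β, 1/(β(β-1))]`. -/
def Sset (β : ℝ) : Set ℝ := Set.Icc (1 / β) (1 / (β * (β - 1)))

/-- `R = (1/(β(β-1)), 1/(β-1)]`. -/
def Rset (β : ℝ) : Set ℝ := Set.Ioc (1 / (β * (β - 1))) (1 / (β - 1))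

/-- The digit produced at the point `x` when the coin shows `a`:
`0` on `L`, `a` on `S`, `1` on `R`. -/
def digitB (β x : ℝ) (a : Bool) : Bool :=
  if x < 1 / β then false else if x ≤ 1 / (β * (β - 1)) then a else true

/-- One step of the random β-transformation on the second coordinate:
`T₀ x = βx` on `L`, `T_a x` on `S`, `T₁ x = βx - 1` on `R`. -/
def rStep (β x : ℝ) (a : Bool) : ℝ := β * x - (if digitB β x a then 1 else 0)

/-- The random β-transformation in skew-product form. -/
def Rmap (β : ℝ) (p : (ℕ → Bool) × ℝ) : (ℕ → Bool) × ℝ :=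
  (shift p.1, rStep β p.2 (p.1 0))

/-- The random β-transformation `K_β` (shifting `ω` only on `S`). -/
def Kmap (β : ℝ) (p : (ℕ → Bool) × ℝ) : (ℕ → Bool) × ℝ :=
  if p.2 < 1 / β then (p.1, β * p.2)
  else if p.2 ≤ 1 / (β * (β - 1)) then (shift p.1, β * p.2 - (if p.1 0 then 1 else 0))
  else (p.1, β * p.2 - 1)

/-- `R^n_{β,w}(x)`: the second coordinate of `R_β^n (ω, x)` for any `ω` starting with `w`. -/
def rItin (β x : ℝ) (w : List Bool) : ℝ := w.foldl (rStep β) x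

/-- `r(w) = R^n_{β,w}(1)`. -/
def rW (β : ℝ) (w : List Bool) : ℝ := rItin β 1 w

/-- The (unnormalised) density `ρ*_β`. -/
def rhoStar (β x : ℝ) : ℝ :=
  ∑' n : ℕ, ((2 * β) ^ n)⁻¹ * ∑ w : Fin n → Bool,
    ((Set.Icc (0 : ℝ) (rW β (List.ofFn w))).indicator 1 x
      + (Set.Icc (rItin β (1 / (β - 1) - 1) (List.ofFn w)) (1 / (β - 1))).indicator 1 x)

/-- `m` is the `(1/2, 1/2)` Bernoulli measure on `{0,1}^ℕ`. -/
def IsBernoulliHalf (m : Measure (ℕ → Bool)) : Prop :=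
  IsProbabilityMeasure m ∧
    ∀ (n : ℕ) (w : Fin n → Bool), m {ω | ∀ i : Fin n, ω i = w i} = (2 : ℝ≥0∞)⁻¹ ^ n

/-- The probability measure `μ_β` on `I_β` with density `ρ*_β / ∫ ρ*_β` w.r.t. Lebesgue. -/
def muBeta (β : ℝ) : Measure ℝ :=
  (volume.restrict (Ibeta β)).withDensity
    (fun x => ENNReal.ofReal (rhoStar β x / ∫ y in Ibeta β, rhoStar β y))

/-- `l(w) = Σ ωᵢ 2^(i-1)`. -/
def lVal : List Bool → ℕ
  | [] => 0
  | a :: t => (if a then 1 else 0) + 2 * lVal t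

/-- `v(w) = Σ_{k<n} β^(-k) + l(w)/(2β)^n`. -/
def vVal (β : ℝ) (w : List Bool) : ℝ :=
  (∑ k ∈ Finset.range w.length, ((β : ℝ) ^ k)⁻¹) + (lVal w : ℝ) / (2 * β) ^ w.length

/-- The sublevel `E_w = Ω × [0, r(w)] × [v(w), v(w) + (2β)^(-n))` of the tower. -/
def Eset (β : ℝ) (w : List Bool) : Set ((ℕ → Bool) × ℝ × ℝ) :=
  {p | p.2.1 ∈ Set.Icc 0 (rW β w) ∧
    p.2.2 ∈ Set.Ico (vVal β w) (vVal β w + ((2 * β) ^ w.length)⁻¹)}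

/-- The tower `E`. -/
def Etower (β : ℝ) : Set ((ℕ → Bool) × ℝ × ℝ) := ⋃ w : List Bool, Eset β w

/-- The step from `w` to `wa` is of type `T₁`. -/
def stepT1 (β : ℝ) (w : List Bool) (a : Bool) : Prop := digitB β (rW β w) a = true

/-- `C₁(wa) = v(wa) - v(w)/(2β)`. -/
def C1 (β : ℝ) (w : List Bool) (a : Bool) : ℝ := vVal β (w ++ [a]) - vVal β w / (2 * β)

/-- `C₂(wa) = 1/(2β) + Σ (2β)^(-(m+1)) - v(w)/(2β)`, summing over pairs `(u, b)` with
the step `u → ub` of type `T₁` and `v(u) < v(w)`. -/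
def C2 (β : ℝ) (w : List Bool) : ℝ :=
  (2 * β)⁻¹ +
    (∑' u : {q : List Bool × Bool // stepT1 β q.1 q.2 ∧ vVal β q.1 < vVal β w},
      ((2 * β) ^ (u.1.1.length + 1))⁻¹) - vVal β w / (2 * β)

/-- The action of `ψ` on points of the sublevel `E_w`. -/
def psiAux (β : ℝ) (w : List Bool) (p : (ℕ → Bool) × ℝ × ℝ) : (ℕ → Bool) × ℝ × ℝ :=
  if digitB β (rW β w) (p.1 0) then
    if p.2.1 < 1 / β then (shift p.1, β * p.2.1, p.2.2 / (2 * β) + C2 β w)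
    else (shift p.1, β * p.2.1 - 1, p.2.2 / (2 * β) + C1 β w (p.1 0))
  else (shift p.1, β * p.2.1, p.2.2 / (2 * β) + C1 β w (p.1 0))

/-- The tower map `ψ : E → E` (the identity off the tower). -/
def psi (β : ℝ) (p : (ℕ → Bool) × ℝ × ℝ) : (ℕ → Bool) × ℝ × ℝ :=
  if h : ∃ w : List Bool, p ∈ Eset β w then psiAux β h.choose p else p

/-- The reflection `P(ω, x, y) = (ω̄, 1/(β-1) - x, -y)`. -/
def Pmap (β : ℝ) (p : (ℕ → Bool) × ℝ × ℝ) : (ℕ → Bool) × ℝ × ℝ :=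
  (compSeq p.1, 1 / (β - 1) - p.2.1, -p.2.2)

/-- The reflected tower `Ē = P(E)`. -/
def Ebar (β : ℝ) : Set ((ℕ → Bool) × ℝ × ℝ) := Pmap β '' Etower β

/-- The exceptional set `F_w ⊆ E_w` (empty unless `r(w) ∈ R`). -/
def Fset (β : ℝ) (w : List Bool) : Set ((ℕ → Bool) × ℝ × ℝ) :=
  {p | p ∈ Eset β w ∧ p.1 0 = false ∧ p.2.1 ∈ Sset β ∧ rW β w ∈ Rset β}

/-- The swap map `Q` interchanging `ψ(F_w)` with `ψ(F̄_w̄) = P(ψ(F_w))`. -/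
def Qmap (β : ℝ) (p : (ℕ → Bool) × ℝ × ℝ) : (ℕ → Bool) × ℝ × ℝ :=
  if ∃ w : List Bool, p ∈ psi β '' Fset β w then (p.1, p.2.1 + 1, -p.2.2)
  else if ∃ w : List Bool, p ∈ Pmap β '' (psi β '' Fset β w) then (p.1, p.2.1 - 1, -p.2.2)
  else p

/-- `ψ` extended to `E ∪ Ē`, acting by `P ∘ ψ ∘ P⁻¹` on `Ē`. -/
def psiFull (β : ℝ) (p : (ℕ → Bool) × ℝ × ℝ) : (ℕ → Bool) × ℝ × ℝ :=
  if p ∈ Etower β then psi β p else Pmap β (psi β (Pmap β p))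

/-- The corrected tower map `ψ̃ = Q ∘ ψ`. -/
def psiTilde (β : ℝ) : ((ℕ → Bool) × ℝ × ℝ) → ((ℕ → Bool) × ℝ × ℝ) :=
  Qmap β ∘ psiFull β

/-- `h(ω, x, n) = #{0 ≤ i ≤ n-1 : π₂(K_β^i(ω,x)) ∈ S}`. -/
def hCount (β : ℝ) (ω : ℕ → Bool) (x : ℝ) (n : ℕ) : ℕ :=
  ((Finset.range n).filter (fun i => ((Kmap β)^[i] (ω, x)).2 ∈ Sset β)).card

/-- `π_β(a) = Σ aᵢ β^(-(i+1))`. -/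
def piB (β : ℝ) (a : ℕ → Bool) : ℝ :=
  ∑' i : ℕ, (if a i then (1 : ℝ) else 0) * ((β : ℝ) ^ (i + 1))⁻¹

/-- `𝒩ₙ(x; β)`: the number of words of length `n` extendable to a β-expansion of `x`. -/
def Ncount (β x : ℝ) (n : ℕ) : ℕ :=
  {a : Fin n → Bool | ∃ b : ℕ → Bool, (∀ i : Fin n, b i = a i) ∧ x = piB β b}.ncard

end

section AuxLemmas

lemma lVal_lt (w : List Bool) : lVal w < 2 ^ w.length := by
  induction w with
  | nil => simp [lVal]
  | cons a t ih =>
    simp only [lVal, List.length_cons, pow_succ]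
    cases a <;> simp only [Bool.false_eq_true, if_true, if_false] <;> omega

lemma lVal_inj {w : List Bool} : ∀ {w' : List Bool},
    w.length = w'.length → lVal w = lVal w' → w = w' := by
  induction w with
  | nil =>
    intro w' hl _
    exact (List.length_eq_zero_iff.mp hl.symm).symm
  | cons a t ih =>
    intro w' hl hv
    cases w' with
    | nil => simp at hl
    | cons b s =>
      simp only [List.length_cons, add_left_inj] at hl
      have hab : a = b := by cases a <;> cases b <;> simp [lVal] at hv ⊢ <;> omega
      subst hab
      have hts : lVal t = lVal s := by cases a <;> simp [lVal] at hv <;> omega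
      rw [ih hl hts]

lemma vVal_lower {β : ℝ} (hβ : 0 < β) (w : List Bool) :
    (∑ k ∈ Finset.range w.length, ((β : ℝ) ^ k)⁻¹) ≤ vVal β w := by
  unfold vVal
  have : 0 ≤ (lVal w : ℝ) / (2 * β) ^ w.length := by positivity
  linarith

lemma vVal_upper {β : ℝ} (hβ : 0 < β) (w : List Bool) :
    vVal β w + ((2 * β) ^ w.length)⁻¹
      ≤ ∑ k ∈ Finset.range (w.length + 1), ((β : ℝ) ^ k)⁻¹ := by
  unfold vVal
  rw [Finset.sum_range_succ]
  have h1 : (0 : ℝ) < (2 * β) ^ w.length := by positivity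
  have h2 : (0 : ℝ) < (β : ℝ) ^ w.length := by positivity
  have hl : (lVal w : ℝ) + 1 ≤ 2 ^ w.length := by
    have := Nat.succ_le_of_lt (lVal_lt w)
    exact_mod_cast this
  have key : (lVal w : ℝ) / (2 * β) ^ w.length + ((2 * β) ^ w.length)⁻¹
      ≤ ((β : ℝ) ^ w.length)⁻¹ := by
    rw [inv_eq_one_div, ← add_div, div_le_iff₀ h1]
    have he : ((β : ℝ) ^ w.length)⁻¹ * (2 * β) ^ w.length = 2 ^ w.length := by
      rw [mul_pow]
      field_simp
    rw [he]
    exact hl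
  linarith

lemma vband_lt_len {β : ℝ} (hβ : 0 < β) {w w' : List Bool} (h : w.length < w'.length) :
    vVal β w + ((2 * β) ^ w.length)⁻¹ ≤ vVal β w' := by
  calc vVal β w + ((2 * β) ^ w.length)⁻¹
      ≤ ∑ k ∈ Finset.range (w.length + 1), ((β : ℝ) ^ k)⁻¹ := vVal_upper hβ w
    _ ≤ ∑ k ∈ Finset.range w'.length, ((β : ℝ) ^ k)⁻¹ := by
        apply Finset.sum_le_sum_of_subset_of_nonneg (Finset.range_subset_range.mpr h)
        intros
        positivity
    _ ≤ vVal β w' := vVal_lower hβ w'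

lemma vband_lt_lVal {β : ℝ} (hβ : 0 < β) {w w' : List Bool} (hlen : w.length = w'.length)
    (h : lVal w < lVal w') : vVal β w + ((2 * β) ^ w.length)⁻¹ ≤ vVal β w' := by
  unfold vVal
  rw [← hlen]
  have h1 : (0 : ℝ) < (2 * β) ^ w.length := by positivity
  have hl : (lVal w : ℝ) + 1 ≤ lVal w' := by exact_mod_cast h
  have key : (lVal w : ℝ) / (2 * β) ^ w.length + ((2 * β) ^ w.length)⁻¹
      ≤ (lVal w' : ℝ) / (2 * β) ^ w.length := by
    rw [inv_eq_one_div, ← add_div]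
    gcongr
  linarith

lemma word_unique {β : ℝ} (hβ : 0 < β) {w w' : List Bool} {y : ℝ}
    (h : y ∈ Set.Ico (vVal β w) (vVal β w + ((2 * β) ^ w.length)⁻¹))
    (h' : y ∈ Set.Ico (vVal β w') (vVal β w' + ((2 * β) ^ w'.length)⁻¹)) : w = w' := by
  obtain ⟨h1, h2⟩ := h
  obtain ⟨h1', h2'⟩ := h'
  rcases Nat.lt_trichotomy w.length w'.length with hl | hl | hl
  · have := vband_lt_len hβ hl
    linarith
  · rcases Nat.lt_trichotomy (lVal w) (lVal w') with hv | hv | hv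
    · have := vband_lt_lVal hβ hl hv
      linarith
    · exact lVal_inj hl hv
    · have := vband_lt_lVal hβ hl.symm hv
      linarith
  · have := vband_lt_len hβ hl
    linarith

lemma psi_eq_psiAux {β : ℝ} (hβ : 0 < β) {w : List Bool} {p : (ℕ → Bool) × ℝ × ℝ}
    (hp : p ∈ Eset β w) : psi β p = psiAux β w p := by
  have hex : ∃ u : List Bool, p ∈ Eset β u := ⟨w, hp⟩
  rw [psi, dif_pos hex]
  have hc := hex.choose_spec
  rw [word_unique hβ hc.2 hp.2]

lemma digitB_true {β x : ℝ} (hβ1 : 1 < β) (hβ2 : β < 2) (hx : x ∈ Rset β) (a : Bool) :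
    digitB β x a = true := by
  have hb : (0 : ℝ) < β - 1 := by linarith
  have hb2 : (0 : ℝ) < β * (β - 1) := by positivity
  have h1 : 1 / β ≤ 1 / (β * (β - 1)) := by
    apply one_div_le_one_div_of_le hb2
    nlinarith
  have h2 := hx.1
  rw [digitB, if_neg (not_lt.mpr (by linarith)), if_neg (not_le.mpr hx.1)]

lemma rW_append (β : ℝ) (w : List Bool) (a : Bool) :
    rW β (w ++ [a]) = rStep β (rW β w) a := by
  simp [rW, rItin, List.foldl_append]

end AuxLemmas

/-- for `r(w) ∈ R`, the image of the exceptional set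
`F_w = {(ω',x,y) ∈ E_w : ω'₁ = 0, x ∈ S}` under `ψ` is exactly
`E_{w0} ∩ (Ω × [0, 1/(β-1) - 1] × ℝ)`. -/
theorem stmt11 (β : ℝ) (hβ : 1 < β ∧ β < 2) (w : List Bool) (hw : rW β w ∈ Rset β) :
    psi β '' Fset β w
      = Eset β (w ++ [false]) ∩ {p | p.2.1 ∈ Set.Icc (0 : ℝ) (1 / (β - 1) - 1)} := by
  obtain ⟨hβ1, hβ2⟩ := hβ
  have hβ0 : (0 : ℝ) < β := by linarith
  have h2β : (0 : ℝ) < 2 * β := by linarith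
  have hb : (0 : ℝ) < β - 1 := by linarith
  have hb2 : (0 : ℝ) < β * (β - 1) := by positivity
  have hSR : 1 / β ≤ 1 / (β * (β - 1)) := one_div_le_one_div_of_le hb2 (by nlinarith)
  have hβinv : β * (1 / β) = 1 := mul_one_div_cancel (ne_of_gt hβ0)
  have hβinv2 : β * (1 / (β * (β - 1))) = 1 / (β - 1) := by
    field_simp
  have hrw0 : rW β (w ++ [false]) = β * rW β w - 1 := by
    rw [rW_append, rStep, digitB_true hβ1 hβ2 hw]
    simp
  have hvw0 : vVal β (w ++ [false]) = vVal β w / (2 * β) + C1 β w false := by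
    rw [C1]; ring
  have hlen : (w ++ [false]).length = w.length + 1 := by simp
  have hpow : (((2 * β) : ℝ) ^ (w.length + 1))⁻¹ = ((2 * β) ^ w.length)⁻¹ / (2 * β) := by
    rw [pow_succ, mul_inv, div_eq_mul_inv]
  ext p
  constructor
  · rintro ⟨q, ⟨hqE, hq0, hqS, -⟩, rfl⟩
    rw [psi_eq_psiAux hβ0 hqE]
    have hps : psiAux β w q = (shift q.1, β * q.2.1 - 1, q.2.2 / (2 * β) + C1 β w false) := by
      rw [psiAux, hq0, digitB_true hβ1 hβ2 hw, if_pos rfl, if_neg (not_lt.mpr hqS.1)]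
    rw [hps]
    obtain ⟨hx1, hx2⟩ := hqS
    obtain ⟨-, hy1, hy2⟩ := hqE
    have e1 : vVal β w / (2 * β) ≤ q.2.2 / (2 * β) := by gcongr
    have e2 : q.2.2 / (2 * β)
        < vVal β w / (2 * β) + ((2 * β) ^ w.length)⁻¹ / (2 * β) := by
      rw [← add_div]
      gcongr
    refine ⟨⟨⟨?_, ?_⟩, ?_, ?_⟩, ?_, ?_⟩
    · nlinarith [mul_le_mul_of_nonneg_left hx1 hβ0.le]
    · rw [hrw0]
      have hxr : q.2.1 ≤ rW β w := le_of_lt (lt_of_le_of_lt hx2 hw.1)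
      nlinarith
    · simp only [hvw0]
      linarith
    · simp only [hlen, hvw0, hpow]
      linarith
    · nlinarith [mul_le_mul_of_nonneg_left hx1 hβ0.le]
    · nlinarith [mul_le_mul_of_nonneg_left hx2 hβ0.le]
  · rintro ⟨⟨hx, hy⟩, hx0, hx1⟩
    rw [hvw0, hlen, hpow] at hy
    obtain ⟨hy1, hy2⟩ := hy
    obtain ⟨-, hxr⟩ := hx
    set x' := p.2.1 with hx'def
    set y' := p.2.2 with hy'def
    set c := C1 β w false with hcdef
    set v := vVal β w with hvdef
    set P := (((2 * β) : ℝ) ^ w.length)⁻¹ with hPdef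
    have hP0 : (0 : ℝ) < P := by positivity
    have ev : 2 * β * (v / (2 * β)) = v := by field_simp
    have eP : 2 * β * (P / (2 * β)) = P := by field_simp
    have hxS : (x' + 1) / β ∈ Sset β := by
      constructor
      · gcongr
        · linarith
      · have h1 : x' + 1 ≤ 1 / (β - 1) := by linarith
        have h2 : (1 / (β - 1)) / β = 1 / (β * (β - 1)) := by
          rw [div_div, mul_comm]
        calc (x' + 1) / β ≤ (1 / (β - 1)) / β := by gcongr
          _ = 1 / (β * (β - 1)) := h2
    have hyE : 2 * β * (y' - c) ∈ Set.Ico v (v + P) := by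
      have hexp1 : 2 * β * (v / (2 * β) + c) = v + 2 * β * c := by
        field_simp
      have hexp2 : 2 * β * (v / (2 * β) + c + P / (2 * β)) = v + 2 * β * c + P := by
        field_simp
      constructor
      · have h := mul_le_mul_of_nonneg_left hy1 h2β.le
        rw [hexp1] at h
        linarith
      · have h := mul_lt_mul_of_pos_left hy2 h2β
        rw [hexp2] at h
        linarith
    have hqE : ((fun n => Nat.casesOn n false p.1 : ℕ → Bool),
        (x' + 1) / β, 2 * β * (y' - c)) ∈ Eset β w := by
      refine ⟨⟨?_, ?_⟩, hyE⟩
      · have : (0 : ℝ) ≤ (x' + 1) / β := by positivity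
        exact this
      · calc (x' + 1) / β ≤ 1 / (β * (β - 1)) := hxS.2
          _ ≤ rW β w := le_of_lt hw.1
    refine ⟨((fun n => Nat.casesOn n false p.1 : ℕ → Bool),
        (x' + 1) / β, 2 * β * (y' - c)), ⟨hqE, rfl, hxS, hw⟩, ?_⟩
    rw [psi_eq_psiAux hβ0 hqE]
    have hps : psiAux β w ((fun n => Nat.casesOn n false p.1 : ℕ → Bool),
        (x' + 1) / β, 2 * β * (y' - c))
        = ((fun n => p.1 n), β * ((x' + 1) / β) - 1, 2 * β * (y' - c) / (2 * β) + c) := by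
      rw [psiAux]
      simp only
      rw [digitB_true hβ1 hβ2 hw, if_pos rfl, if_neg (not_lt.mpr hxS.1)]
      rfl
    rw [hps]
    have h2 : β * ((x' + 1) / β) - 1 = x' := by field_simp; ring
    have h3 : 2 * β * (y' - c) / (2 * β) + c = y' := by field_simp; ring
    rw [h2, h3]

end RandomBeta
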